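/- Let H : [0,1] → ℝ be continuously differentiable and 0 ≤ a < 1−b ≤ 1. Define Δ := a H(a) + ∫_a^{1−b} H(v) dv + b H(1−b). Then ∫_a^{1−b} ∫_a^{1−b} (min(v,w) − vw) H'(v) H'(w) dv dw = a H(a)² + b H(1−b)² + ∫_a^{1−b} H(v)² dv − Δ². -/

import Mathlib

open intervalIntegral

theorem MTM_equal_trimming_variance (H H' : ℝ → ℝ)
    (hH : ∀ v ∈ Set.Icc (0:ℝ) 1, HasDerivAt H (H' v) v)
    (hH' : ContinuousOn H' (Set.Icc (0:ℝ) 1))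
    (a b : ℝ) (ha : 0 ≤ a) (hab : a < 1 - b) (hb1 : 1 - b ≤ 1) :
    ∫ w in a..(1 - b), ∫ v in a..(1 - b), (min v w - v * w) * H' v * H' w
      = a * H a ^ 2 + b * H (1 - b) ^ 2 + (∫ v in a..(1 - b), H v ^ 2)
        - (a * H a + (∫ v in a..(1 - b), H v) + b * H (1 - b)) ^ 2 := by
  have haB : a ≤ 1 - b := hab.le
  have hsub : Set.uIcc a (1 - b) ⊆ Set.Icc (0:ℝ) 1 := by
    rw [Set.uIcc_of_le haB]
    exact Set.Icc_subset_Icc ha hb1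
  have hHca : ∀ x ∈ Set.Icc (0:ℝ) 1, ContinuousAt H x := fun x hx => (hH x hx).continuousAt
  have hHcont : ContinuousOn H (Set.Icc (0:ℝ) 1) :=
    fun x hx => (hHca x hx).continuousWithinAt
  have hintH : ∀ c d : ℝ, Set.uIcc c d ⊆ Set.Icc (0:ℝ) 1 → IntervalIntegrable H
      MeasureTheory.volume c d := fun c d h => (hHcont.mono h).intervalIntegrable
  have hintH' : ∀ c d : ℝ, Set.uIcc c d ⊆ Set.Icc (0:ℝ) 1 → IntervalIntegrable H'
      MeasureTheory.volume c d := fun c d h => (hH'.mono h).intervalIntegrable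
  set I := ∫ v in a..(1 - b), H v with hI
  set G : ℝ → ℝ := fun w => ∫ t in a..w, H t with hG
  set D := a * H a + I + b * H (1 - b) with hD
  -- Step 1: inner integral
  have key : Set.EqOn (fun w => ∫ v in a..(1 - b), (min v w - v * w) * H' v * H' w)
      (fun w => (w * D - a * H a - G w) * H' w) (Set.uIcc a (1 - b)) := by
    intro w hw
    rw [Set.uIcc_of_le haB] at hw
    have hsubaw : Set.uIcc a w ⊆ Set.Icc (0:ℝ) 1 := by
      rw [Set.uIcc_of_le hw.1]
      exact fun x hx => ⟨le_trans ha hx.1, le_trans hx.2 (le_trans hw.2 hb1)⟩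
    have hsubwB : Set.uIcc w (1 - b) ⊆ Set.Icc (0:ℝ) 1 := by
      rw [Set.uIcc_of_le hw.2]
      exact fun x hx => ⟨le_trans ha (le_trans hw.1 hx.1), le_trans hx.2 hb1⟩
    have cmin : Continuous fun v : ℝ => min v w - v * w :=
      (continuous_id.min continuous_const).sub (continuous_id.mul continuous_const)
    have intg1 : IntervalIntegrable (fun v => (min v w - v * w) * H' v)
        MeasureTheory.volume a w :=
      ((cmin.continuousOn).mul (hH'.mono hsubaw)).intervalIntegrable
    have intg2 : IntervalIntegrable (fun v => (min v w - v * w) * H' v)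
        MeasureTheory.volume w (1 - b) :=
      ((cmin.continuousOn).mul (hH'.mono hsubwB)).intervalIntegrable
    have hsplit := intervalIntegral.integral_add_adjacent_intervals intg1 intg2
    -- part A : ∫ v in a..w
    have eA : Set.EqOn (fun v => (min v w - v * w) * H' v)
        (fun v => (1 - w) * (v * H' v)) (Set.uIcc a w) := by
      intro v hv
      rw [Set.uIcc_of_le hw.1] at hv
      simp only
      rw [min_eq_left hv.2]; ring
    have pA : (∫ v in a..w, v * H' v) = w * H w - a * H a - ∫ v in a..w, 1 * H v := by
      exact intervalIntegral.integral_mul_deriv_eq_deriv_mul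
        (fun x _ => hasDerivAt_id x) (fun x hx => hH x (hsubaw hx))
        intervalIntegrable_const (hintH' a w hsubaw)
    have partA : (∫ v in a..w, (min v w - v * w) * H' v)
        = (1 - w) * (w * H w - a * H a - G w) := by
      rw [intervalIntegral.integral_congr eA, intervalIntegral.integral_const_mul, pA]
      simp [hG]
    -- part B : ∫ v in w..(1-b)
    have eB : Set.EqOn (fun v => (min v w - v * w) * H' v)
        (fun v => w * ((1 - v) * H' v)) (Set.uIcc w (1 - b)) := by
      intro v hv
      rw [Set.uIcc_of_le hw.2] at hv
      simp only
      rw [min_eq_right hv.1]; ring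
    have pB : (∫ v in w..(1 - b), (1 - v) * H' v)
        = (1 - (1 - b)) * H (1 - b) - (1 - w) * H w - ∫ v in w..(1 - b), (-1) * H v := by
      exact intervalIntegral.integral_mul_deriv_eq_deriv_mul
        (fun x _ => (hasDerivAt_id x).const_sub 1) (fun x hx => hH x (hsubwB hx))
        intervalIntegrable_const (hintH' w (1 - b) hsubwB)
    have hGsplit : G w + (∫ v in w..(1 - b), H v) = I :=
      intervalIntegral.integral_add_adjacent_intervals (hintH a w hsubaw)
        (hintH w (1 - b) hsubwB)
    have partB : (∫ v in w..(1 - b), (min v w - v * w) * H' v)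
        = w * ((1 - (1 - b)) * H (1 - b) - (1 - w) * H w + (I - G w)) := by
      rw [intervalIntegral.integral_congr eB, intervalIntegral.integral_const_mul, pB]
      have h1 : (∫ v in w..(1 - b), (-1:ℝ) * H v) = -(∫ v in w..(1 - b), H v) := by
        simp [neg_one_mul]
      have h2 : (∫ v in w..(1 - b), H v) = I - G w := by linarith [hGsplit]
      rw [h1, h2]; ring
    simp only
    rw [intervalIntegral.integral_mul_const, ← hsplit, partA, partB, hD]
    ring
  rw [intervalIntegral.integral_congr key]
  -- Step 2: outer integral by parts
  have hGcont : ContinuousOn G (Set.uIcc a (1 - b)) :=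
    intervalIntegral.continuousOn_primitive_interval ((hHcont.mono hsub).integrableOn_uIcc)
  have hucont : ContinuousOn (fun w => w * D - a * H a - G w) (Set.uIcc a (1 - b)) :=
    (((continuousOn_id.mul continuousOn_const).sub continuousOn_const).sub hGcont)
  have huderiv : ∀ x ∈ Set.Ioo (min a (1 - b)) (max a (1 - b)),
      HasDerivAt (fun w => w * D - a * H a - G w) (D - H x) x := by
    intro x hx
    rw [min_eq_left haB, max_eq_right haB] at hx
    have hx01 : x ∈ Set.Ioo (0:ℝ) 1 :=
      ⟨lt_of_le_of_lt ha hx.1, lt_of_lt_of_le hx.2 hb1⟩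
    have hmeas : StronglyMeasurableAtFilter H (nhds x) MeasureTheory.volume :=
      ContinuousAt.stronglyMeasurableAtFilter isOpen_Ioo
        (fun y hy => hHca y (Set.Ioo_subset_Icc_self hy)) x hx01
    have hGd : HasDerivAt G (H x) x := by
      refine intervalIntegral.integral_hasDerivAt_right ?_ hmeas
        (hHca x (Set.Ioo_subset_Icc_self hx01))
      refine hintH a x ?_
      rw [Set.uIcc_of_le hx.1.le]
      exact fun y hy => ⟨le_trans ha hy.1, le_trans hy.2 hx01.2.le⟩
    have := (((hasDerivAt_id x).mul_const D).sub_const (a * H a)).sub hGd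
    rw [one_mul] at this
    exact this
  have parts2 := intervalIntegral.integral_mul_deriv_eq_deriv_mul_of_hasDerivAt
    (u := fun w => w * D - a * H a - G w) (v := H) (u' := fun w => D - H w) (v' := H')
    hucont (hHcont.mono hsub) huderiv
    (fun x hx => by
      rw [min_eq_left haB, max_eq_right haB] at hx
      exact hH x (hsub (by rw [Set.uIcc_of_le haB]; exact Set.Ioo_subset_Icc_self hx)))
    ((continuousOn_const.sub (hHcont.mono hsub)).intervalIntegrable)
    (hintH' a (1 - b) hsub)
  rw [parts2]
  have hGa : G a = 0 := intervalIntegral.integral_same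
  have hGB : G (1 - b) = I := rfl
  have hlast : (∫ w in a..(1 - b), (D - H w) * H w) = D * I - ∫ v in a..(1 - b), H v ^ 2 := by
    have e : Set.EqOn (fun w => (D - H w) * H w) (fun w => D * H w - H w ^ 2)
        (Set.uIcc a (1 - b)) := fun w _ => by simp only; ring
    rw [intervalIntegral.integral_congr e, intervalIntegral.integral_sub,
      intervalIntegral.integral_const_mul]
    · exact (continuousOn_const.mul (hHcont.mono hsub)).intervalIntegrable
    · exact ((hHcont.mono hsub).pow 2).intervalIntegrable
  rw [hlast, hGa, hGB, hD]
  ring
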